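/- Let P and Q be finite sets of segments in ℝ² with unions UP and UQ, and suppose UQ is nonempty. If C(X,r) is a locally largest circle separating P (inside) from Q (outside), then r = infDist(X, UQ), i.e. the circle touches Q: the distance from X to the (closed) set UQ equals r. (Indeed, if r < infDist(X, UQ), then the circle C(X, infDist(X, UQ)) with the same center also separates P from Q and has strictly larger radius, contradicting local maximality.) -/
import Mathlib


noncomputable section

/-- The Euclidean plane. -/
abbrev Plane := EuclideanSpace ℝ (Fin 2)

/-- The union of a finite set of segments (each given by its pair of endpoints). -/
def segUnion (P : Finset (Plane × Plane)) : Set Plane :=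
  ⋃ s ∈ P, segment ℝ s.1 s.2

/-- The circle of center `X` and radius `r` separates `A` (inside) from `B` (outside). -/
def Separates (X : Plane) (r : ℝ) (A B : Set Plane) : Prop :=
  A ⊆ Metric.closedBall X r ∧ B ∩ Metric.ball X r = ∅

/-- `C(X,r)` is a locally largest circle separating `A` (inside) from `B` (outside). -/
def LocallyLargestSeparating (X : Plane) (r : ℝ) (A B : Set Plane) : Prop :=
  Separates X r A B ∧
    ∃ ε > 0, ∀ X' : Plane, ∀ r' : ℝ, dist X X' < ε → r < r' → ¬ Separates X' r' A B

/-- A locally largest circle separating `P` (inside) from `Q` (outside) touches `Q`: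
its radius equals the distance from its center to the union of `Q`. -/
theorem locally_largest_touches_outer_set
    (P Q : Finset (Plane × Plane)) (UP UQ : Set Plane)
    (hUP : UP = segUnion P) (hUQ : UQ = segUnion Q) (hQ : UQ.Nonempty)
    (X : Plane) (r : ℝ)
    (hmax : LocallyLargestSeparating X r UP UQ) :
    r = Metric.infDist X UQ := by
  obtain ⟨⟨hin, hout⟩, ε, hε, hloc⟩ := hmax
  have hd : ∀ q ∈ UQ, r ≤ dist X q := by
    intro q hq
    by_contra h
    push_neg at h
    have : q ∈ UQ ∩ Metric.ball X r := ⟨hq, by simpa [Metric.mem_ball, dist_comm] using h⟩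
    simp [hout] at this
  have h1 : r ≤ Metric.infDist X UQ := by
    by_contra h1
    push_neg at h1
    obtain ⟨q, hq, hlt⟩ := (Metric.infDist_lt_iff hQ).1 h1
    exact absurd hlt (not_lt.2 (hd q hq))
  rcases eq_or_lt_of_le h1 with h | h
  · exact h
  · exfalso
    apply hloc X (Metric.infDist X UQ) (by simpa using hε) h
    constructor
    · exact hin.trans (Metric.closedBall_subset_closedBall h1)
    · ext q
      simp only [Set.mem_inter_iff, Metric.mem_ball, Set.mem_empty_iff_false, iff_false, not_and]
      intro hq
      rw [dist_comm]
      exact not_lt.2 (Metric.infDist_le_dist_of_mem hq)
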